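/- The SC-FM combination matrix R̃^c has rank equal to (M−1)K + 1 = MK − (K − 1); in particular it has full row rank. -/

import Mathlib

/-- The SC-FM combination matrix `R̃^c`: rows indexed by pairs `(k, m)` with `k ∈ [K]`,
`m ∈ [M-1]` (representing the value `m + 1 ∈ {1, …, M-1}`) together with one extra row;
columns indexed by tuples `f = (m_1, …, m_K)` with each `m_k ∈ {0, 1, …, M-1}`.
The entry at row `(k, m)` and column `f` is `1` if `m_k = m` and `0` otherwise, and the
entry of the extra row at column `f` is the number of indices `k` with `m_k = 0`. -/
def scCombMatrix (M K : ℕ) : Matrix ((Fin K × Fin (M - 1)) ⊕ Unit) (Fin K → Fin M) ℝ :=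
  fun r f =>
    match r with
    | Sum.inl (k, m) => if (f k : ℕ) = (m : ℕ) + 1 then 1 else 0
    | Sum.inr _ => ((Finset.univ.filter fun k => (f k : ℕ) = 0).card : ℝ)

/-- The SC-FM combination matrix `R̃^c` has rank `(M-1)K + 1 = MK - (K-1)`;
in particular it has full row rank. -/
theorem rank_scCombMatrix (M K : ℕ) (hM : 1 ≤ M) (hK : 1 ≤ K) :
    (scCombMatrix M K).rank = (M - 1) * K + 1 ∧
      (scCombMatrix M K).rank = M * K - (K - 1) := by
  have hM0 : 0 < M := hM
  have hli : LinearIndependent ℝ (scCombMatrix M K).row := by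
    rw [Fintype.linearIndependent_iff]
    intro g hg
    have h0 : g (Sum.inr ()) = 0 := by
      have h := congrFun hg (fun _ => ⟨0, hM0⟩)
      simp only [Finset.sum_apply, Pi.smul_apply, smul_eq_mul, Pi.zero_apply,
        Fintype.sum_sum_type, Matrix.row_apply, scCombMatrix] at h
      simp at h
      rcases h with h | h
      · exact h
      · omega
    intro i
    match i with
    | Sum.inr () => exact h0
    | Sum.inl (k, m) =>
      have hm : (m : ℕ) + 1 < M := by omega
      have h := congrFun hg (fun j => if j = k then (⟨(m : ℕ) + 1, hm⟩ : Fin M) else ⟨0, hM0⟩)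
      simp only [Finset.sum_apply, Pi.smul_apply, smul_eq_mul, Pi.zero_apply,
        Fintype.sum_sum_type, Fintype.sum_prod_type, Matrix.row_apply, scCombMatrix, h0] at h
      rw [Finset.sum_eq_single k] at h
      · rw [Finset.sum_eq_single m] at h
        · simpa using h
        · intro m' _ hm'
          have : ¬ ((m : ℕ) + 1 = (m' : ℕ) + 1) := fun hc => hm' (Fin.ext (by omega)).symm
          simp [this]
          intro hc; omega
        · simp
      · intro k' _ hk'
        have : ((if (k' : Fin K) = k then (⟨(m : ℕ) + 1, hm⟩ : Fin M)
            else ⟨0, hM0⟩) : Fin M).val = 0 := by simp [hk']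
        apply Finset.sum_eq_zero
        intro m' _
        simp [this]
      · simp
  have hr : (scCombMatrix M K).rank = (M - 1) * K + 1 := by
    rw [hli.rank_matrix]
    simp [Fintype.card_sum, Fintype.card_prod, Nat.mul_comm]
  refine ⟨hr, ?_⟩
  rw [hr, Nat.sub_one_mul]
  have hKM : K ≤ M * K := Nat.le_mul_of_pos_left K hM0
  omega
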